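/- Let E be a directed graph, H a hereditary subset of E⁰, and S ⊆ H ∪ B_H. If a vertex v lying on a cycle of E belongs to the S-saturation of H, then v ∈ H. -/

import Mathlib

/-- A directed graph: vertices, edges, and source/range maps. -/
structure DGraph where
  V : Type
  E : Type
  src : E → V
  rng : E → V

namespace DGraph

variable (G : DGraph)

/-- A subset of vertices is hereditary if ranges of edges emitted from it stay in it. -/
def Hereditary (H : Set G.V) : Prop := ∀ e : G.E, G.src e ∈ H → G.rng e ∈ H

/-- A vertex is regular if it emits a nonzero finite number of edges. -/
def Regular (v : G.V) : Prop :=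
  {e : G.E | G.src e = v}.Finite ∧ {e : G.E | G.src e = v}.Nonempty

/-- A vertex is singular if it is a sink or an infinite emitter. -/
def Singular (v : G.V) : Prop := ¬ Regular G v

/-- A vertex emitting infinitely many edges. -/
def InfEmitter (v : G.V) : Prop := {e : G.E | G.src e = v}.Infinite

/-- A subset is saturated if it contains every regular vertex all of whose
emitted edges have range in the subset. -/
def Saturated (H : Set G.V) : Prop :=
  ∀ v : G.V, Regular G v → (∀ e : G.E, G.src e = v → G.rng e ∈ H) → v ∈ H

/-- A breaking vertex for a hereditary set `H`. -/
def Breaking (H : Set G.V) (v : G.V) : Prop :=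
  InfEmitter G v ∧ v ∉ H ∧
    {e : G.E | G.src e = v ∧ G.rng e ∉ H}.Finite ∧
    {e : G.E | G.src e = v ∧ G.rng e ∉ H}.Nonempty

/-- `X` contains `H`, is hereditary saturated, and absorbs vertices of `S`
all of whose emitted edges have range in `X`. -/
def SClosed (H S X : Set G.V) : Prop :=
  H ⊆ X ∧ Hereditary G X ∧ Saturated G X ∧
    ∀ v ∈ S, (∀ e : G.E, G.src e = v → G.rng e ∈ X) → v ∈ X

/-- The `S`-saturation of `H`: the smallest `SClosed` set. -/
def SSat (H S : Set G.V) : Set G.V := ⋂₀ {X | SClosed G H S X}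

end DGraph

/-- Inductive description of a set that is `SClosed` (when `H` is hereditary). -/
inductive DGraph.Gen (G : DGraph) (H S : Set G.V) : G.V → Prop
  | base {v : G.V} : v ∈ H → DGraph.Gen G H S v
  | sat {v : G.V} : DGraph.Regular G v →
      (∀ e : G.E, G.src e = v → DGraph.Gen G H S (G.rng e)) → DGraph.Gen G H S v
  | sclo {v : G.V} : v ∈ S →
      (∀ e : G.E, G.src e = v → DGraph.Gen G H S (G.rng e)) → DGraph.Gen G H S v

lemma DGraph.Gen_SClosed (G : DGraph) (H S : Set G.V) (hH : DGraph.Hereditary G H) :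
    DGraph.SClosed G H S {v | DGraph.Gen G H S v} := by
  refine ⟨fun v hv => DGraph.Gen.base hv, ?_, fun v hreg hall => DGraph.Gen.sat hreg hall,
    fun v hvS hall => DGraph.Gen.sclo hvS hall⟩
  intro e he
  cases he with
  | base h => exact DGraph.Gen.base (hH e h)
  | sat _ hall => exact hall e rfl
  | sclo _ hall => exact hall e rfl

/-- Around a cycle: the range of the `i`-th edge is the source of the `(i+1)`-th edge
(indices mod `n`). -/
lemma cycle_next (G : DGraph) (L : List G.E) (hL : L ≠ []) [NeZero L.length]
    (hchain : L.Chain' (fun e f => G.rng e = G.src f))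
    (hclosed : G.rng (L.getLast hL) = G.src (L.head hL)) :
    ∀ i : ZMod L.length,
      G.rng (L.get ⟨i.val, ZMod.val_lt i⟩) = G.src (L.get ⟨(i + 1).val, ZMod.val_lt _⟩) := by
  intro i
  have hnpos : 0 < L.length := List.length_pos_iff.2 hL
  rcases lt_or_ge (i.val + 1) L.length with hlt | hge
  · have h1n : 1 < L.length := lt_of_le_of_lt (Nat.succ_le_succ (Nat.zero_le _)) hlt
    haveI : Fact (1 < L.length) := ⟨h1n⟩
    have hval : (i + 1 : ZMod L.length).val = i.val + 1 := by
      rw [ZMod.val_add, ZMod.val_one, Nat.mod_eq_of_lt hlt]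
    have h := List.isChain_iff_getElem.1 hchain i.val (by omega)
    simp only [List.get_eq_getElem, hval]
    exact h
  · have hival : i.val = L.length - 1 := by have := ZMod.val_lt i; omega
    have hi : i = ((L.length - 1 : ℕ) : ZMod L.length) := by
      apply ZMod.val_injective
      rw [ZMod.val_cast_of_lt (by omega), hival]
    have hzero : (i + 1 : ZMod L.length) = 0 := by
      rw [hi]
      have h2 : ((L.length - 1 : ℕ) : ZMod L.length) + 1
          = ((L.length - 1 + 1 : ℕ) : ZMod L.length) := by push_cast; ring
      rw [h2, Nat.sub_add_cancel hnpos, ZMod.natCast_self]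
    have hvz : (i + 1 : ZMod L.length).val = 0 := by rw [hzero, ZMod.val_zero]
    have h1 : L.get ⟨i.val, ZMod.val_lt i⟩ = L.getLast hL := by
      rw [List.getLast_eq_getElem]
      simp only [List.get_eq_getElem, hival]
    have h2 : L.get ⟨(i + 1).val, ZMod.val_lt _⟩ = L.head hL := by
      have h3 : (⟨(i + 1).val, ZMod.val_lt _⟩ : Fin L.length) = ⟨0, hnpos⟩ := Fin.ext hvz
      rw [h3, List.get_mk_zero]
    rw [h1, h2, hclosed]

/-- If a hereditary set contains one vertex of a cycle, it contains all of them. -/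
lemma cycle_absorb (G : DGraph) (H : Set G.V) (hH : DGraph.Hereditary G H)
    (L : List G.E) (hL : L ≠ []) [NeZero L.length]
    (hchain : L.Chain' (fun e f => G.rng e = G.src f))
    (hclosed : G.rng (L.getLast hL) = G.src (L.head hL)) :
    ∀ i j : Fin L.length, G.src (L.get i) ∈ H → G.src (L.get j) ∈ H := by
  have key := cycle_next G L hL hchain hclosed
  have step : ∀ i : ZMod L.length, G.src (L.get ⟨i.val, ZMod.val_lt i⟩) ∈ H →
      G.src (L.get ⟨(i + 1).val, ZMod.val_lt _⟩) ∈ H := by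
    intro i hi
    have h := hH _ hi
    rwa [key i] at h
  have prop : ∀ (k : ℕ) (i : ZMod L.length), G.src (L.get ⟨i.val, ZMod.val_lt i⟩) ∈ H →
      G.src (L.get ⟨(i + (k : ZMod L.length)).val, ZMod.val_lt _⟩) ∈ H := by
    intro k
    induction k with
    | zero => intro i hi; simpa using hi
    | succ k ih =>
      intro i hi
      have h := ih (i + 1) (step i hi)
      have harith : (i + 1 + (k : ZMod L.length)) = i + ((k + 1 : ℕ) : ZMod L.length) := by
        push_cast; ring
      rwa [harith] at h
  intro i j hi
  have hiv : ((i.val : ZMod L.length)).val = i.val := ZMod.val_cast_of_lt i.isLt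
  have hjv : ((j.val : ZMod L.length)).val = j.val := ZMod.val_cast_of_lt j.isLt
  have h := prop ((j.val : ZMod L.length) - (i.val : ZMod L.length)).val (i.val : ZMod L.length)
    (by
      have h0 : (⟨((i.val : ZMod L.length)).val, ZMod.val_lt _⟩ : Fin L.length) = i :=
        Fin.ext hiv
      rwa [h0])
  have harith : (i.val : ZMod L.length) +
      ((((j.val : ZMod L.length) - (i.val : ZMod L.length)).val : ℕ) : ZMod L.length)
      = (j.val : ZMod L.length) := by
    rw [ZMod.natCast_val, ZMod.cast_id]; ring
  rw [harith] at h
  have hfin : (⟨((j.val : ZMod L.length)).val, ZMod.val_lt _⟩ : Fin L.length) = j :=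
    Fin.ext hjv
  rwa [hfin] at h

/-- a vertex lying on a cycle that belongs to the `S`-saturation of `H`
must already lie in `H`.  A cycle is a nonempty closed chain of edges whose source
vertices are pairwise distinct. -/
theorem mem_SSat_of_on_cycle (G : DGraph) (H S : Set G.V)
    (hH : DGraph.Hereditary G H)
    (hS : S ⊆ H ∪ {v : G.V | DGraph.Breaking G H v})
    (L : List G.E) (hL : L ≠ [])
    (hchain : L.Chain' (fun e f => G.rng e = G.src f))
    (hclosed : G.rng (L.getLast hL) = G.src (L.head hL))
    (hnodup : (L.map G.src).Nodup)
    (v : G.V) (hv : v ∈ L.map G.src)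
    (hmem : v ∈ DGraph.SSat G H S) :
    v ∈ H := by
  have hgen : DGraph.Gen G H S v := hmem _ (DGraph.Gen_SClosed G H S hH)
  clear hmem hnodup hS
  -- membership in the cycle as an index
  have hmemidx : ∀ w : G.V, w ∈ L.map G.src ↔ ∃ i : Fin L.length, G.src (L.get i) = w := by
    intro w
    constructor
    · intro h
      obtain ⟨e, he, rfl⟩ := List.mem_map.1 h
      obtain ⟨i, rfl⟩ := List.mem_iff_get.1 he
      exact ⟨i, rfl⟩
    · rintro ⟨i, rfl⟩
      exact List.mem_map.2 ⟨L.get i, List.mem_iff_get.2 ⟨i, rfl⟩, rfl⟩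
  haveI : NeZero L.length := ⟨(List.length_pos_iff.2 hL).ne'⟩
  have key := cycle_next G L hL hchain hclosed
  revert hv
  induction hgen with
  | base h => intro _; exact h
  | @sat w hreg hall ih =>
    intro hw
    obtain ⟨i, hi⟩ := (hmemidx w).1 hw
    set i' : ZMod L.length := (i.val : ZMod L.length) with hi'def
    have hiv : i'.val = i.val := ZMod.val_cast_of_lt i.isLt
    have hieq : (⟨i'.val, ZMod.val_lt i'⟩ : Fin L.length) = i := Fin.ext hiv
    have hsrc : G.src (L.get ⟨i'.val, ZMod.val_lt i'⟩) = w := by rw [hieq]; exact hi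
    have hrmem : G.rng (L.get ⟨i'.val, ZMod.val_lt i'⟩) ∈ L.map G.src := by
      rw [key i']
      exact (hmemidx _).2 ⟨_, rfl⟩
    have hrH : G.rng (L.get ⟨i'.val, ZMod.val_lt i'⟩) ∈ H := ih _ hsrc hrmem
    rw [key i'] at hrH
    have := cycle_absorb G H hH L hL hchain hclosed ⟨(i' + 1).val, ZMod.val_lt _⟩ i hrH
    rwa [hi] at this
  | @sclo w hwS hall ih =>
    intro hw
    obtain ⟨i, hi⟩ := (hmemidx w).1 hw
    set i' : ZMod L.length := (i.val : ZMod L.length) with hi'def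
    have hiv : i'.val = i.val := ZMod.val_cast_of_lt i.isLt
    have hieq : (⟨i'.val, ZMod.val_lt i'⟩ : Fin L.length) = i := Fin.ext hiv
    have hsrc : G.src (L.get ⟨i'.val, ZMod.val_lt i'⟩) = w := by rw [hieq]; exact hi
    have hrmem : G.rng (L.get ⟨i'.val, ZMod.val_lt i'⟩) ∈ L.map G.src := by
      rw [key i']
      exact (hmemidx _).2 ⟨_, rfl⟩
    have hrH : G.rng (L.get ⟨i'.val, ZMod.val_lt i'⟩) ∈ H := ih _ hsrc hrmem
    rw [key i'] at hrH
    have := cycle_absorb G H hH L hL hchain hclosed ⟨(i' + 1).val, ZMod.val_lt _⟩ i hrH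
    rwa [hi] at this
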